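/- Let H be a closed convex set in R^2 satisfying the interior sphere condition of radius d (every boundary point lies on a closed disk of radius d contained in H). Then for any x, y ∈ ∂H with unit outward normals ν(x), ν(y), we have |ν(x) − ν(y)| ≤ |x − y|/d. -/

import Mathlib

open Metric Set
open scoped RealInnerProductSpace

/-- `ν` is an outward unit normal to the convex body `H` at the boundary point `x`. -/
def IsOutwardUnitNormal  (H : Set (EuclideanSpace ℝ (Fin 2)))
    (x ν : EuclideanSpace ℝ (Fin 2)) : Prop :=
  ‖ν‖ = 1 ∧ ∀ z ∈ H, (inner ℝ (z - x) ν : ℝ) ≤ 0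

lemma center_eq (H : Set (EuclideanSpace ℝ (Fin 2))) (d : ℝ) (hd : 0 < d)
    (x ν c : EuclideanSpace ℝ (Fin 2))
    (hball : Metric.closedBall c d ⊆ H) (hx : x ∈ Metric.closedBall c d)
    (hν : IsOutwardUnitNormal H x ν) : c = x - d • ν := by
  obtain ⟨hn, hsup⟩ := hν
  have hmem : c + d • ν ∈ H := by
    apply hball
    simp [Metric.mem_closedBall, dist_eq_norm, norm_smul, hn, abs_of_pos hd]
  have h1 : (inner ℝ (c + d • ν - x) ν : ℝ) ≤ 0 := hsup _ hmem
  have h2 : (inner ℝ (c - x) ν : ℝ) + d ≤ 0 := by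
    have he : (inner ℝ (c + d • ν - x) ν : ℝ)
        = inner ℝ (c - x) ν + d * (inner ℝ ν ν : ℝ) := by
      rw [show c + d • ν - x = (c - x) + d • ν by abel]
      rw [inner_add_left, real_inner_smul_left]
    rw [he, real_inner_self_eq_norm_sq, hn] at h1
    linarith
  have hge : d ≤ (inner ℝ (x - c) ν : ℝ) := by
    have he : (inner ℝ (x - c) ν : ℝ) = -(inner ℝ (c - x) ν : ℝ) := by
      rw [← inner_neg_left]; congr 1; abel
    linarith [he]
  have hCS : (inner ℝ (x - c) ν : ℝ) ≤ ‖x - c‖ * ‖ν‖ := real_inner_le_norm _ _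
  have hxc : ‖x - c‖ ≤ d := by
    rw [Metric.mem_closedBall, dist_eq_norm] at hx; exact hx
  have heq : (inner ℝ (x - c) ν : ℝ) = ‖x - c‖ * ‖ν‖ := by
    rw [hn]; nlinarith
  have hnorm : ‖x - c‖ = d := by rw [hn] at hCS; nlinarith
  have h3 := (inner_eq_norm_mul_iff_real).mp heq
  rw [hn, one_smul, hnorm] at h3
  have h4 : c = x - d • ν := by
    rw [← h3]; abel
  exact h4

lemma key_ineq (H : Set (EuclideanSpace ℝ (Fin 2))) (d : ℝ) (hd : 0 < d)
    (hsphere : ∀ p ∈ frontier H, ∃ c, p ∈ Metric.closedBall c d ∧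
      Metric.closedBall c d ⊆ H)
    (x y νx νy : EuclideanSpace ℝ (Fin 2)) (hx : x ∈ frontier H)
    (hνx : IsOutwardUnitNormal H x νx) (hνy : IsOutwardUnitNormal H y νy) :
    (inner ℝ (x - y) νy : ℝ) ≤ -d * (1 - inner ℝ νx νy) := by
  obtain ⟨c, hxc, hball⟩ := hsphere x hx
  have hc : c = x - d • νx := center_eq H d hd x νx c hball hxc hνx
  have hmem : c + d • νy ∈ H := by
    apply hball
    simp [Metric.mem_closedBall, dist_eq_norm, norm_smul, hνy.1, abs_of_pos hd]
  have h1 : (inner ℝ (c + d • νy - y) νy : ℝ) ≤ 0 := hνy.2 _ hmem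
  have hexp : (inner ℝ (c + d • νy - y) νy : ℝ)
      = inner ℝ (x - y) νy - d * inner ℝ νx νy + d * (inner ℝ νy νy : ℝ) := by
    rw [hc, show x - d • νx + d • νy - y = (x - y) + (-(d • νx)) + d • νy by abel]
    rw [inner_add_left, inner_add_left, inner_neg_left, real_inner_smul_left,
      real_inner_smul_left]
    ring
  rw [hexp, real_inner_self_eq_norm_sq, hνy.1] at h1
  nlinarith [h1]

/-- A closed convex set in `ℝ²` satisfying a uniform interior sphere condition of radius
`d > 0` has a `1/d`-Lipschitz Gauss map: `|ν(x) − ν(y)| ≤ (1/d)|x − y|`. -/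
theorem gauss_map_lipschitz_of_interior_sphere 
    (H : Set (EuclideanSpace ℝ (Fin 2))) (hHc : Convex ℝ H) (hHcl : IsClosed H)
    (d : ℝ) (hd : 0 < d)
    (hsphere : ∀ p ∈ frontier H, ∃ c, p ∈ Metric.closedBall c d ∧
      Metric.closedBall c d ⊆ H) :
    ∀ x ∈ frontier H, ∀ y ∈ frontier H, ∀ νx νy,
      IsOutwardUnitNormal H x νx → IsOutwardUnitNormal H y νy →
      ‖νx - νy‖ ≤ (1 / d) * ‖x - y‖ := by
  intro x hx y hy νx νy hνx hνy
  have h1 : (inner ℝ (x - y) νy : ℝ) ≤ -d * (1 - inner ℝ νx νy) :=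
    key_ineq H d hd hsphere x y νx νy hx hνx hνy
  have h2 : (inner ℝ (y - x) νx : ℝ) ≤ -d * (1 - inner ℝ νy νx) :=
    key_ineq H d hd hsphere y x νy νx hy hνy hνx
  have hsymm : (inner ℝ νy νx : ℝ) = inner ℝ νx νy := real_inner_comm _ _
  have hsq : ‖νx - νy‖ ^ 2 = 2 - 2 * (inner ℝ νx νy : ℝ) := by
    rw [norm_sub_sq_real, hνx.1, hνy.1]
    ring
  have hsum : d * ‖νx - νy‖ ^ 2 ≤ (inner ℝ (x - y) (νx - νy) : ℝ) := by
    have he : (inner ℝ (x - y) (νx - νy) : ℝ)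
        = -(inner ℝ (y - x) νx : ℝ) - (inner ℝ (x - y) νy : ℝ) := by
      rw [inner_sub_right]
      have e1 : (inner ℝ (y - x) νx : ℝ) = -(inner ℝ (x - y) νx : ℝ) := by
        rw [← inner_neg_left]; congr 1; abel
      rw [e1]; ring
    rw [he, hsq]
    linarith [h1, h2, hsymm.symm ▸ h2]
  have hCS : (inner ℝ (x - y) (νx - νy) : ℝ) ≤ ‖x - y‖ * ‖νx - νy‖ :=
    real_inner_le_norm _ _
  rcases eq_or_lt_of_le (norm_nonneg (νx - νy)) with h0 | h0
  · rw [← h0]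
    positivity
  · have hkey : d * ‖νx - νy‖ ^ 2 ≤ ‖x - y‖ * ‖νx - νy‖ := le_trans hsum hCS
    rw [div_mul_eq_mul_div, le_div_iff₀ hd]
    nlinarith
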